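/- arXiv:2403.14122 — 2 statements merged into one kernel-verified Lean document; each statement's English description precedes it below -/
import Mathlib

section
/- Let p ≥ 3 and suppose (β,h) is a p-special point, i.e. H = H_{β,h,p} has a unique global maximizer m_* ∈ (−1,1) and H''(m_*) = 0. Then H'(m_*) = H''(m_*) = H^{(3)}(m_*) = 0 and H^{(4)}(m_*) < 0. -/
open Real MeasureTheory Filter
open scoped BigOperators Topology

noncomputable section

/-- The spin value (`±1`) of a Boolean coordinate. -/
def spin (b : Bool) : ℝ := if b then 1 else -1

/-- The total magnetization `S_N = ∑ᵢ Xᵢ` of a configuration. -/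
def mag {N : ℕ} (x : Fin N → Bool) : ℝ := ∑ i, spin (x i)

/-- The Hamiltonian of the `p`-spin Curie-Weiss model:
`β N^{1-p} ∑_{i₁,…,i_p} x_{i₁} ⋯ x_{i_p} + h ∑ᵢ xᵢ`. -/
def cwHamiltonian (p N : ℕ) (β h : ℝ) (x : Fin N → Bool) : ℝ :=
  β * (N : ℝ) ^ ((1 : ℤ) - (p : ℤ)) * (∑ i : Fin p → Fin N, ∏ j, spin (x (i j)))
    + h * mag x

/-- The (unnormalized) Gibbs weight of a configuration. -/
def cwWeight (p N : ℕ) (β h : ℝ) (x : Fin N → Bool) : ℝ :=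
  Real.exp (cwHamiltonian p N β h x)

/-- The probability of an event `E` under the `p`-spin Curie-Weiss measure `P_{β,h,p}`. -/
def cwProb (p N : ℕ) (β h : ℝ) (E : Set (Fin N → Bool)) : ℝ :=
  (∑ x : Fin N → Bool, E.indicator (cwWeight p N β h) x) /
    ∑ x : Fin N → Bool, cwWeight p N β h x

/-- Conditional probability of `E` given `A` under the `p`-spin Curie-Weiss measure. -/
def cwCondProb (p N : ℕ) (β h : ℝ) (E A : Set (Fin N → Bool)) : ℝ :=
  cwProb p N β h (E ∩ A) / cwProb p N β h A

/-- The binary entropy function `I(x) = ½[(1+x)log(1+x) + (1-x)log(1-x)]`. -/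
def binEnt (x : ℝ) : ℝ := (1/2) * ((1+x) * Real.log (1+x) + (1-x) * Real.log (1-x))

/-- The function `H_{β,h,p}(x) = βxᵖ + hx - I(x)`. -/
def Hfun (p : ℕ) (β h : ℝ) (x : ℝ) : ℝ := β * x ^ p + h * x - binEnt x

/-- `m` is a global maximizer of `H_{β,h,p}` on `[-1,1]`, lying in `(-1,1)`. -/
def isMaximizer (p : ℕ) (β h m : ℝ) : Prop :=
  m ∈ Set.Ioo (-1 : ℝ) 1 ∧ ∀ x ∈ Set.Icc (-1 : ℝ) 1, Hfun p β h x ≤ Hfun p β h m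

/-- `m` is the unique global maximizer of `H_{β,h,p}`. -/
def isUniqueMaximizer (p : ℕ) (β h m : ℝ) : Prop :=
  isMaximizer p β h m ∧ ∀ m', isMaximizer p β h m' → m' = m

/-- `(β,h)` is a `p`-regular point with unique global maximizer `m`. -/
def pRegular (p : ℕ) (β h m : ℝ) : Prop :=
  isUniqueMaximizer p β h m ∧ iteratedDeriv 2 (Hfun p β h) m < 0

/-- `(β,h)` is a `p`-special point with unique global maximizer `m`. -/
def pSpecial (p : ℕ) (β h m : ℝ) : Prop :=
  isUniqueMaximizer p β h m ∧ iteratedDeriv 2 (Hfun p β h) m = 0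

/-- `(β,h)` is a `p`-critical point: `H_{β,h,p}` has more than one global maximizer. -/
def pCritical (p : ℕ) (β h : ℝ) : Prop :=
  ∃ m₁ m₂, m₁ ≠ m₂ ∧ isMaximizer p β h m₁ ∧ isMaximizer p β h m₂

/-- The probability assigned to a set `S ⊆ ℝ` by the centered Gaussian with variance `v`. -/
def gaussProb (v : ℝ) (S : Set ℝ) : ℝ :=
  ∫ t in S, (Real.sqrt (2 * Real.pi * v))⁻¹ * Real.exp (-t ^ 2 / (2 * v))

/-- The CDF of the centered Gaussian with variance `v`. -/
def gaussCDF (v x : ℝ) : ℝ := gaussProb v (Set.Iic x)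

/-- The standard normal CDF `Φ`. -/
def stdNormCDF (x : ℝ) : ℝ := gaussCDF 1 x

/-- The CDF of the limit law `F` at a `p`-special point, where `c = H⁽⁴⁾(m_*)`:
`dF(x) = (2/Γ(1/4)) (-c/24)^{1/4} exp(c x⁴/24) dx`. -/
def specialCDF (c x : ℝ) : ℝ :=
  ∫ t in Set.Iic x, (2 / Real.Gamma (1/4)) * ((-c) / 24) ^ ((1:ℝ)/4) * Real.exp (c * t ^ 4 / 24)

/-- The inverse hyperbolic tangent `tanh⁻¹(t) = ½ log((1+t)/(1-t))`. -/
def arctanh (t : ℝ) : ℝ := (1/2) * Real.log ((1+t)/(1-t))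

/-- The function `g(t) = tanh⁻¹(t)/(p t^{p-1})`, so that the maximum pseudolikelihood
estimate of `β` is `g(X̄)`. -/
def gMPL (p : ℕ) (t : ℝ) : ℝ := arctanh t / (p * t ^ (p - 1))

/-- The threshold `β*(p) = inf{β ≥ 0 : sup_{x∈[0,1]} H_{β,0,p}(x) > 0}`. -/
def betaStar (p : ℕ) : ℝ := sInf {b : ℝ | 0 ≤ b ∧ ∃ x ∈ Set.Icc (0:ℝ) 1, 0 < Hfun p b 0 x}


namespace DerivAux

noncomputable def Hd1 (p : ℕ) (β h : ℝ) (x : ℝ) : ℝ :=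
  β * (p:ℝ) * x ^ (p-1) + h - (1/2) * (Real.log (1+x) - Real.log (1-x))
noncomputable def Hd2 (p : ℕ) (β h : ℝ) (x : ℝ) : ℝ :=
  β * ((p:ℝ) * ((p-1:ℕ):ℝ)) * x ^ (p-2) - 1/(1-x^2)
noncomputable def Hd3 (p : ℕ) (β h : ℝ) (x : ℝ) : ℝ :=
  β * ((p:ℝ) * ((p-1:ℕ):ℝ) * ((p-2:ℕ):ℝ)) * x ^ (p-3) - 2*x/(1-x^2)^2
noncomputable def Hd4 (p : ℕ) (β h : ℝ) (x : ℝ) : ℝ :=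
  β * ((p:ℝ) * ((p-1:ℕ):ℝ) * ((p-2:ℕ):ℝ) * ((p-3:ℕ):ℝ)) * x ^ (p-4) - (2+6*x^2)/(1-x^2)^3

lemma hasDerivAt_Hfun {p : ℕ} {β h : ℝ} {x : ℝ} (hx : x ∈ Set.Ioo (-1:ℝ) 1) :
    HasDerivAt (Hfun p β h) (Hd1 p β h x) x := by
  obtain ⟨hx1, hx2⟩ := hx
  have h1x : (0:ℝ) < 1 + x := by linarith
  have h2x : (0:ℝ) < 1 - x := by linarith
  have dlog1 : HasDerivAt (fun y : ℝ => Real.log (1+y)) (1/(1+x)) x := by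
    simpa using ((hasDerivAt_id x).const_add 1).log (ne_of_gt h1x)
  have dlog2 : HasDerivAt (fun y : ℝ => Real.log (1-y)) (-1/(1-x)) x := by
    simpa using ((hasDerivAt_id x).const_sub 1).log (ne_of_gt h2x)
  have t1 : HasDerivAt (fun y : ℝ => (1+y) * Real.log (1+y)) (Real.log (1+x) + 1) x := by
    have := ((hasDerivAt_id x).const_add 1).mul dlog1
    refine this.congr_deriv ?_
    simp only [id]
    field_simp
  have t2 : HasDerivAt (fun y : ℝ => (1-y) * Real.log (1-y)) (-(Real.log (1-x)) - 1) x := by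
    have := ((hasDerivAt_id x).const_sub 1).mul dlog2
    refine this.congr_deriv ?_
    simp only [id]
    field_simp
    ring
  have dbin : HasDerivAt binEnt ((1/2) * (Real.log (1+x) - Real.log (1-x))) x := by
    have := (t1.add t2).const_mul (1/2 : ℝ)
    refine this.congr_deriv ?_
    ring
  have dp : HasDerivAt (fun y : ℝ => β * y ^ p) (β * ((p:ℝ) * x ^ (p-1))) x :=
    (hasDerivAt_pow p x).const_mul β
  have dh : HasDerivAt (fun y : ℝ => h * y) h x := by
    simpa using (hasDerivAt_id x).const_mul h
  have := (dp.add dh).sub dbin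
  refine this.congr_deriv ?_
  unfold Hd1; ring

lemma hasDerivAt_Hd1 {p : ℕ} {β h : ℝ} (hp : 3 ≤ p) {x : ℝ} (hx : x ∈ Set.Ioo (-1:ℝ) 1) :
    HasDerivAt (Hd1 p β h) (Hd2 p β h x) x := by
  obtain ⟨hx1, hx2⟩ := hx
  have h1x : (0:ℝ) < 1 + x := by linarith
  have h2x : (0:ℝ) < 1 - x := by linarith
  have hq : (1:ℝ) - x^2 ≠ 0 := by nlinarith
  have dlog1 : HasDerivAt (fun y : ℝ => Real.log (1+y)) (1/(1+x)) x := by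
    simpa using ((hasDerivAt_id x).const_add 1).log (ne_of_gt h1x)
  have dlog2 : HasDerivAt (fun y : ℝ => Real.log (1-y)) (-1/(1-x)) x := by
    simpa using ((hasDerivAt_id x).const_sub 1).log (ne_of_gt h2x)
  have dp : HasDerivAt (fun y : ℝ => β * (p:ℝ) * y ^ (p-1))
      (β * (p:ℝ) * (((p-1:ℕ):ℝ) * x ^ (p-2))) x := by
    have := (hasDerivAt_pow (p-1) x).const_mul (β * (p:ℝ))
    rwa [show p-1-1 = p-2 from by omega] at this
  have := ((dp.add_const h).sub ((dlog1.sub dlog2).const_mul (1/2 : ℝ)))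
  refine this.congr_deriv ?_
  unfold Hd2
  field_simp
  ring

lemma hasDerivAt_Hd2 {p : ℕ} {β h : ℝ} (hp : 3 ≤ p) {x : ℝ} (hx : x ∈ Set.Ioo (-1:ℝ) 1) :
    HasDerivAt (Hd2 p β h) (Hd3 p β h x) x := by
  obtain ⟨hx1, hx2⟩ := hx
  have hq : (1:ℝ) - x^2 ≠ 0 := by nlinarith
  have dp : HasDerivAt (fun y : ℝ => β * ((p:ℝ) * ((p-1:ℕ):ℝ)) * y ^ (p-2))
      (β * ((p:ℝ) * ((p-1:ℕ):ℝ)) * (((p-2:ℕ):ℝ) * x ^ (p-3))) x := by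
    have := (hasDerivAt_pow (p-2) x).const_mul (β * ((p:ℝ) * ((p-1:ℕ):ℝ)))
    rwa [show p-2-1 = p-3 from by omega] at this
  have g : HasDerivAt (fun y : ℝ => 1 - y^2) (-(2*x)) x := by
    simpa using (hasDerivAt_pow 2 x).const_sub 1
  have d2 : HasDerivAt (fun y : ℝ => 1/(1-y^2)) (2*x/(1-x^2)^2) x := by
    have := (hasDerivAt_const x (1:ℝ)).div g hq
    refine this.congr_deriv ?_
    field_simp
    ring
  have := dp.sub d2
  refine this.congr_deriv ?_
  unfold Hd3
  ring

lemma hasDerivAt_Hd3 {p : ℕ} {β h : ℝ} (hp : 3 ≤ p) {x : ℝ} (hx : x ∈ Set.Ioo (-1:ℝ) 1) :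
    HasDerivAt (Hd3 p β h) (Hd4 p β h x) x := by
  obtain ⟨hx1, hx2⟩ := hx
  have hq : (1:ℝ) - x^2 ≠ 0 := by nlinarith
  have dp : HasDerivAt (fun y : ℝ => β * ((p:ℝ) * ((p-1:ℕ):ℝ) * ((p-2:ℕ):ℝ)) * y ^ (p-3))
      (β * ((p:ℝ) * ((p-1:ℕ):ℝ) * ((p-2:ℕ):ℝ)) * (((p-3:ℕ):ℝ) * x ^ (p-4))) x := by
    have := (hasDerivAt_pow (p-3) x).const_mul (β * ((p:ℝ) * ((p-1:ℕ):ℝ) * ((p-2:ℕ):ℝ)))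
    rwa [show p-3-1 = p-4 from by omega] at this
  have g : HasDerivAt (fun y : ℝ => 1 - y^2) (-(2*x)) x := by
    simpa using (hasDerivAt_pow 2 x).const_sub 1
  have num : HasDerivAt (fun y : ℝ => 2*y) (2:ℝ) x := by
    simpa using (hasDerivAt_id x).const_mul (2:ℝ)
  have g2 : HasDerivAt (fun y : ℝ => (1-y^2)^2) (2*(1-x^2)*(-(2*x))) x := by
    have := g.pow 2
    refine this.congr_deriv ?_
    ring
  have hq2 : ((1:ℝ)-x^2)^2 ≠ 0 := pow_ne_zero _ hq
  have d2 : HasDerivAt (fun y : ℝ => 2*y/(1-y^2)^2) ((2+6*x^2)/(1-x^2)^3) x := by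
    have := num.div g2 hq2
    refine this.congr_deriv ?_
    field_simp
    ring
  have := dp.sub d2
  refine this.congr_deriv ?_
  unfold Hd4
  ring

lemma Hd4_neg {p : ℕ} (hp : 3 ≤ p) {β h m : ℝ} (hm : m ∈ Set.Ioo (-1:ℝ) 1)
    (e2 : Hd2 p β h m = 0) (e3 : Hd3 p β h m = 0) : Hd4 p β h m < 0 := by
  obtain ⟨hm1, hm2'⟩ := hm
  set P : ℝ := (p:ℝ) with hPdef
  have hP : (3:ℝ) ≤ P := by rw [hPdef]; exact_mod_cast hp
  have c1 : ((p-1:ℕ):ℝ) = P - 1 := by rw [Nat.cast_sub (by omega)]; norm_num [hPdef]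
  have c2 : ((p-2:ℕ):ℝ) = P - 2 := by rw [Nat.cast_sub (by omega)]; norm_num [hPdef]
  have c3 : ((p-3:ℕ):ℝ) = P - 3 := by rw [Nat.cast_sub (by omega)]; norm_num [hPdef]
  have hq : (0:ℝ) < 1 - m^2 := by nlinarith
  have hqne : (1:ℝ) - m^2 ≠ 0 := ne_of_gt hq
  unfold Hd2 at e2; unfold Hd3 at e3
  rw [c1] at e2 e3; rw [c2] at e3
  have hpow : m^(p-2) = m^(p-3)*m := by rw [← pow_succ]; congr 1; omega
  have e2' : β*(P*(P-1))*m^(p-2) = 1/(1-m^2) := by linarith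
  have E2 : β*(P*(P-1))*(m^(p-3)*m)*(1-m^2) = 1 := by
    rw [hpow] at e2'
    field_simp at e2'
    linarith
  have e3' : β*(P*(P-1)*(P-2))*m^(p-3) = 2*m/(1-m^2)^2 := by linarith
  have E3 : β*(P*(P-1)*(P-2))*m^(p-3)*(1-m^2)^2 = 2*m := by
    field_simp at e3'
    linarith
  have hm0 : m ≠ 0 := by
    intro h0
    rw [h0] at E2
    simp at E2
  have key : (P-2)*(1-m^2) = 2*m^2 := by
    linear_combination m * E3 - (P-2)*(1-m^2) * E2
  have hm2 : P*m^2 = P - 2 := by linear_combination -key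
  have hKm : β*(P*(P-1))*m^(p-3)*m = P/2 := by
    have hP2 : P*(1-m^2) = 2 := by linear_combination -hm2
    linear_combination (P/2)*E2 - (β*(P*(P-1))*m^(p-3)*m/2)*hP2
  have hP2 : P*(1-m^2) = 2 := by linear_combination -hm2
  have hpow2 : (P-3) * m^(p-4) * m = (P-3) * m^(p-3) := by
    rcases Nat.eq_or_lt_of_le hp with h3 | h4
    · have : P = 3 := by rw [hPdef, ← h3]; norm_num
      rw [this]; ring_nf
    · have h43 : p - 4 + 1 = p - 3 := by omega
      rw [mul_assoc, ← pow_succ, h43]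
  have ht1 : β * (P*(P-1)*(P-2)*(P-3)) * m^(p-4) * m^2 = (P-2)*(P-3)*(P/2) := by
    linear_combination (β*P*(P-1)*(P-2)*m)*hpow2 + ((P-2)*(P-3))*hKm
  have hm2pos : 0 < m^2 := by positivity
  have hterm1 : β * (P*(P-1)*(P-2)*(P-3)) * m^(p-4) = (P-3)*P^2/2 := by
    have hP2pos : (0:ℝ) < P - 2 := by linarith
    apply mul_right_cancel₀ (ne_of_gt hP2pos)
    linear_combination P*ht1 - (β * (P*(P-1)*(P-2)*(P-3)) * m^(p-4))*hm2
  have h1m : (1:ℝ) - m^2 = 2/P := by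
    rw [eq_div_iff (by linarith : P ≠ 0)]
    linear_combination hP2
  have ht2 : (2+6*m^2)/(1-m^2)^3 = (2+6*m^2)*P^3/8 := by
    rw [h1m]
    field_simp
    ring
  have hterm2 : (2+6*m^2)/(1-m^2)^3 = (8*P-12)*P^2/8 := by
    rw [ht2]
    linear_combination (3*P^2/4)*hm2
  unfold Hd4
  rw [c1, c2, c3, hterm2]
  rw [show β * (P * (P - 1) * (P - 2) * (P - 3)) * m ^ (p - 4) = (P-3)*P^2/2 from hterm1]
  nlinarith [hP]

lemma Hd3_eq_zero {p : ℕ} (hp : 3 ≤ p) {β h m : ℝ} (hm : m ∈ Set.Ioo (-1:ℝ) 1)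
    (hmax : ∀ x ∈ Set.Icc (-1:ℝ) 1, Hfun p β h x ≤ Hfun p β h m)
    (e1 : Hd1 p β h m = 0) (e2 : Hd2 p β h m = 0) : Hd3 p β h m = 0 := by
  by_contra hne
  have hcont : ContinuousAt (Hd3 p β h) m :=
    (hasDerivAt_Hd3 hp hm).differentiableAt.continuousAt
  rcases Ne.lt_or_gt hne with hc | hc
  · -- Hd3 m < 0 : work on [m-δ, m]
    have hev : ∀ᶠ x in nhds m, Hd3 p β h x < 0 ∧ x ∈ Set.Ioo (-1:ℝ) 1 :=
      (hcont.eventually (eventually_lt_nhds hc)).and (isOpen_Ioo.eventually_mem hm)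
    obtain ⟨ε, hε, hball⟩ := Metric.eventually_nhds_iff.mp hev
    set δ : ℝ := ε/2 with hδdef
    have hδ : 0 < δ := by positivity
    set a : ℝ := m - δ with hadef
    have ham : a < m := by simp [hadef]; linarith
    have hprop : ∀ x ∈ Set.Icc a m, Hd3 p β h x < 0 ∧ x ∈ Set.Ioo (-1:ℝ) 1 := by
      intro x hx
      apply hball
      rw [Real.dist_eq, abs_lt]
      constructor <;> [skip; skip] <;>
        simp only [hadef] at hx <;> cases' hx with h1 h2 <;> linarith
    have hJI : ∀ x ∈ Set.Icc a m, x ∈ Set.Ioo (-1:ℝ) 1 := fun x hx => (hprop x hx).2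
    -- Hd2 strictly decreasing on [a,m]
    have hA : StrictAntiOn (Hd2 p β h) (Set.Icc a m) := by
      apply strictAntiOn_of_deriv_neg (convex_Icc a m)
      · exact fun x hx => (hasDerivAt_Hd2 hp (hJI x hx)).continuousAt.continuousWithinAt
      · intro x hx
        rw [interior_Icc] at hx
        rw [(hasDerivAt_Hd2 hp (hJI x (Set.Ioo_subset_Icc_self hx))).deriv]
        exact (hprop x (Set.Ioo_subset_Icc_self hx)).1
    have hA' : ∀ x ∈ Set.Ico a m, 0 < Hd2 p β h x := by
      intro x hx
      have := hA (Set.Ico_subset_Icc_self hx) (Set.right_mem_Icc.mpr (le_of_lt ham)) hx.2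
      rw [e2] at this
      linarith
    -- Hd1 strictly increasing on [a,m]
    have hB : StrictMonoOn (Hd1 p β h) (Set.Icc a m) := by
      apply strictMonoOn_of_deriv_pos (convex_Icc a m)
      · exact fun x hx => (hasDerivAt_Hd1 hp (hJI x hx)).continuousAt.continuousWithinAt
      · intro x hx
        rw [interior_Icc] at hx
        rw [(hasDerivAt_Hd1 hp (hJI x (Set.Ioo_subset_Icc_self hx))).deriv]
        exact hA' x ⟨le_of_lt hx.1, hx.2⟩
    have hB' : ∀ x ∈ Set.Ico a m, Hd1 p β h x < 0 := by
      intro x hx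
      have := hB (Set.Ico_subset_Icc_self hx) (Set.right_mem_Icc.mpr (le_of_lt ham)) hx.2
      rw [e1] at this
      linarith
    -- Hfun strictly decreasing on [a,m]
    have hC : StrictAntiOn (Hfun p β h) (Set.Icc a m) := by
      apply strictAntiOn_of_deriv_neg (convex_Icc a m)
      · exact fun x hx => (hasDerivAt_Hfun (hJI x hx)).continuousAt.continuousWithinAt
      · intro x hx
        rw [interior_Icc] at hx
        rw [(hasDerivAt_Hfun (hJI x (Set.Ioo_subset_Icc_self hx))).deriv]
        exact hB' x ⟨le_of_lt hx.1, hx.2⟩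
    have hlt : Hfun p β h m < Hfun p β h a :=
      hC (Set.left_mem_Icc.mpr (le_of_lt ham)) (Set.right_mem_Icc.mpr (le_of_lt ham)) ham
    have haI : a ∈ Set.Icc (-1:ℝ) 1 :=
      Set.Ioo_subset_Icc_self (hJI a (Set.left_mem_Icc.mpr (le_of_lt ham)))
    exact absurd (hmax a haI) (not_le.mpr hlt)
  · -- 0 < Hd3 m : work on [m, m+δ]
    have hev : ∀ᶠ x in nhds m, 0 < Hd3 p β h x ∧ x ∈ Set.Ioo (-1:ℝ) 1 :=
      (hcont.eventually (eventually_gt_nhds hc)).and (isOpen_Ioo.eventually_mem hm)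
    obtain ⟨ε, hε, hball⟩ := Metric.eventually_nhds_iff.mp hev
    set δ : ℝ := ε/2 with hδdef
    have hδ : 0 < δ := by positivity
    set b : ℝ := m + δ with hbdef
    have hmb : m < b := by simp [hbdef]; linarith
    have hprop : ∀ x ∈ Set.Icc m b, 0 < Hd3 p β h x ∧ x ∈ Set.Ioo (-1:ℝ) 1 := by
      intro x hx
      apply hball
      rw [Real.dist_eq, abs_lt]
      constructor <;> [skip; skip] <;>
        simp only [hbdef] at hx <;> cases' hx with h1 h2 <;> linarith
    have hJI : ∀ x ∈ Set.Icc m b, x ∈ Set.Ioo (-1:ℝ) 1 := fun x hx => (hprop x hx).2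
    have hA : StrictMonoOn (Hd2 p β h) (Set.Icc m b) := by
      apply strictMonoOn_of_deriv_pos (convex_Icc m b)
      · exact fun x hx => (hasDerivAt_Hd2 hp (hJI x hx)).continuousAt.continuousWithinAt
      · intro x hx
        rw [interior_Icc] at hx
        rw [(hasDerivAt_Hd2 hp (hJI x (Set.Ioo_subset_Icc_self hx))).deriv]
        exact (hprop x (Set.Ioo_subset_Icc_self hx)).1
    have hA' : ∀ x ∈ Set.Ioc m b, 0 < Hd2 p β h x := by
      intro x hx
      have := hA (Set.left_mem_Icc.mpr (le_of_lt hmb)) ⟨le_of_lt hx.1, hx.2⟩ hx.1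
      rw [e2] at this
      linarith
    have hB : StrictMonoOn (Hd1 p β h) (Set.Icc m b) := by
      apply strictMonoOn_of_deriv_pos (convex_Icc m b)
      · exact fun x hx => (hasDerivAt_Hd1 hp (hJI x hx)).continuousAt.continuousWithinAt
      · intro x hx
        rw [interior_Icc] at hx
        rw [(hasDerivAt_Hd1 hp (hJI x (Set.Ioo_subset_Icc_self hx))).deriv]
        exact hA' x ⟨hx.1, le_of_lt hx.2⟩
    have hB' : ∀ x ∈ Set.Ioc m b, 0 < Hd1 p β h x := by
      intro x hx
      have := hB (Set.left_mem_Icc.mpr (le_of_lt hmb)) ⟨le_of_lt hx.1, hx.2⟩ hx.1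
      rw [e1] at this
      linarith
    have hC : StrictMonoOn (Hfun p β h) (Set.Icc m b) := by
      apply strictMonoOn_of_deriv_pos (convex_Icc m b)
      · exact fun x hx => (hasDerivAt_Hfun (hJI x hx)).continuousAt.continuousWithinAt
      · intro x hx
        rw [interior_Icc] at hx
        rw [(hasDerivAt_Hfun (hJI x (Set.Ioo_subset_Icc_self hx))).deriv]
        exact hB' x ⟨hx.1, le_of_lt hx.2⟩
    have hlt : Hfun p β h m < Hfun p β h b :=
      hC (Set.left_mem_Icc.mpr (le_of_lt hmb)) (Set.right_mem_Icc.mpr (le_of_lt hmb)) hmb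
    have hbI : b ∈ Set.Icc (-1:ℝ) 1 :=
      Set.Ioo_subset_Icc_self (hJI b (Set.right_mem_Icc.mpr (le_of_lt hmb)))
    exact absurd (hmax b hbI) (not_le.mpr hlt)

lemma iter1_eq {p : ℕ} {β h : ℝ} {x : ℝ} (hx : x ∈ Set.Ioo (-1:ℝ) 1) :
    iteratedDeriv 1 (Hfun p β h) x = Hd1 p β h x := by
  rw [iteratedDeriv_one]
  exact (hasDerivAt_Hfun hx).deriv

lemma iter2_eq {p : ℕ} {β h : ℝ} (hp : 3 ≤ p) {x : ℝ} (hx : x ∈ Set.Ioo (-1:ℝ) 1) :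
    iteratedDeriv 2 (Hfun p β h) x = Hd2 p β h x := by
  rw [show (2:ℕ) = 1+1 from rfl, iteratedDeriv_succ]
  have hev : iteratedDeriv 1 (Hfun p β h) =ᶠ[nhds x] Hd1 p β h :=
    Filter.eventuallyEq_of_mem (isOpen_Ioo.mem_nhds hx) (fun y hy => iter1_eq hy)
  rw [hev.deriv_eq]
  exact (hasDerivAt_Hd1 hp hx).deriv

lemma iter3_eq {p : ℕ} {β h : ℝ} (hp : 3 ≤ p) {x : ℝ} (hx : x ∈ Set.Ioo (-1:ℝ) 1) :
    iteratedDeriv 3 (Hfun p β h) x = Hd3 p β h x := by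
  rw [show (3:ℕ) = 2+1 from rfl, iteratedDeriv_succ]
  have hev : iteratedDeriv 2 (Hfun p β h) =ᶠ[nhds x] Hd2 p β h :=
    Filter.eventuallyEq_of_mem (isOpen_Ioo.mem_nhds hx) (fun y hy => iter2_eq hp hy)
  rw [hev.deriv_eq]
  exact (hasDerivAt_Hd2 hp hx).deriv

lemma iter4_eq {p : ℕ} {β h : ℝ} (hp : 3 ≤ p) {x : ℝ} (hx : x ∈ Set.Ioo (-1:ℝ) 1) :
    iteratedDeriv 4 (Hfun p β h) x = Hd4 p β h x := by
  rw [show (4:ℕ) = 3+1 from rfl, iteratedDeriv_succ]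
  have hev : iteratedDeriv 3 (Hfun p β h) =ᶠ[nhds x] Hd3 p β h :=
    Filter.eventuallyEq_of_mem (isOpen_Ioo.mem_nhds hx) (fun y hy => iter3_eq hp hy)
  rw [hev.deriv_eq]
  exact (hasDerivAt_Hd3 hp hx).deriv

end DerivAux

/-- **Derivatives of `H` at a `p`-special point.** -/
theorem derivatives_at_special_point
    (p : ℕ) (hp : 3 ≤ p) (β h m : ℝ) (hβ : 0 < β) (hh : 0 < h)
    (hsp : pSpecial p β h m) :
    iteratedDeriv 1 (Hfun p β h) m = 0 ∧
    iteratedDeriv 2 (Hfun p β h) m = 0 ∧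
    iteratedDeriv 3 (Hfun p β h) m = 0 ∧
    iteratedDeriv 4 (Hfun p β h) m < 0 := by
  obtain ⟨⟨⟨hmIoo, hmax⟩, _⟩, h2⟩ := hsp
  have e1 : DerivAux.Hd1 p β h m = 0 := by
    have hloc : IsLocalMax (Hfun p β h) m :=
      Filter.eventually_of_mem (isOpen_Ioo.mem_nhds hmIoo)
        (fun x hx => hmax x (Set.Ioo_subset_Icc_self hx))
    have := hloc.deriv_eq_zero
    rw [← (DerivAux.hasDerivAt_Hfun hmIoo).deriv]
    exact this
  have e2 : DerivAux.Hd2 p β h m = 0 := by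
    rw [← DerivAux.iter2_eq hp hmIoo]
    exact h2
  have e3 : DerivAux.Hd3 p β h m = 0 := DerivAux.Hd3_eq_zero hp hmIoo hmax e1 e2
  refine ⟨?_, h2, ?_, ?_⟩
  · rw [DerivAux.iter1_eq hmIoo]; exact e1
  · rw [DerivAux.iter3_eq hp hmIoo]; exact e3
  · rw [DerivAux.iter4_eq hp hmIoo]
    exact DerivAux.Hd4_neg hp hmIoo e2 e3
end
end

section
/- Let a ≠ 0 and c be real constants and σ > 0, let Z be a centered Gaussian random variable with variance σ², and for each integer N ≥ 2 set b_N := c/√N. Then there exists a constant C > 0 (depending only on a, c, σ) such that for all N ≥ 2, sup_{x ∈ ℝ} | P( aZ + b_N Z² > x ) − P( aZ > x ) | ≤ C (log N)/√N. -/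
open Real MeasureTheory Filter
open scoped BigOperators Topology

noncomputable section

section GQPHelpers
open Set

lemma my_mono {f : ℝ → ℝ} (hf : Integrable f) (hf0 : ∀ t, 0 ≤ f t)
    {s t : Set ℝ} (h : s ⊆ t) : ∫ u in s, f u ≤ ∫ u in t, f u :=
  setIntegral_mono_set hf.integrableOn (ae_of_all _ hf0) (HasSubset.Subset.eventuallyLE h)

lemma my_union_le {f : ℝ → ℝ} (hf : Integrable f) (hf0 : ∀ t, 0 ≤ f t)
    {S₁ S₂ : Set ℝ} (h₁ : MeasurableSet S₁) (h₂ : MeasurableSet S₂) :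
    ∫ t in S₁ ∪ S₂, f t ≤ (∫ t in S₁, f t) + ∫ t in S₂, f t := by
  have he : S₁ ∪ S₂ = S₁ ∪ (S₂ \ S₁) := (union_diff_self).symm
  rw [he, setIntegral_union disjoint_sdiff_self_right (h₂.diff h₁)
    hf.integrableOn hf.integrableOn]
  exact add_le_add (le_refl _) (my_mono hf hf0 diff_subset)

lemma my_abs_diff {f : ℝ → ℝ} (hf : Integrable f) (hf0 : ∀ t, 0 ≤ f t)
    {A B S : Set ℝ} (hA : MeasurableSet A) (hB : MeasurableSet B)
    (hsub : (A \ B) ∪ (B \ A) ⊆ S) :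
    |(∫ t in A, f t) - ∫ t in B, f t| ≤ ∫ t in S, f t := by
  have hAeq : (∫ t in A, f t) = (∫ t in A ∩ B, f t) + ∫ t in A \ B, f t := by
    rw [← setIntegral_union (disjoint_sdiff_self_right.mono_left inter_subset_right)
      (hA.diff hB) hf.integrableOn hf.integrableOn, inter_union_diff]
  have hBeq : (∫ t in B, f t) = (∫ t in A ∩ B, f t) + ∫ t in B \ A, f t := by
    rw [← setIntegral_union (disjoint_sdiff_self_right.mono_left inter_subset_left)
      (hB.diff hA) hf.integrableOn hf.integrableOn, inter_comm, inter_union_diff]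
  rw [hAeq, hBeq, abs_le]
  have h1 : ∫ t in A \ B, f t ≤ ∫ t in S, f t :=
    my_mono hf hf0 ((subset_union_left).trans hsub)
  have h2 : ∫ t in B \ A, f t ≤ ∫ t in S, f t :=
    my_mono hf hf0 ((subset_union_right).trans hsub)
  have h3 : 0 ≤ ∫ t in A \ B, f t := setIntegral_nonneg (hA.diff hB) fun t _ => hf0 t
  have h4 : 0 ≤ ∫ t in B \ A, f t := setIntegral_nonneg (hB.diff hA) fun t _ => hf0 t
  constructor <;> linarith

lemma my_tail {v T : ℝ} (hv : 0 < v) (hT : 0 < T) :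
    ∫ t in Ioi T, Real.exp (-t^2/(2*v)) ≤ (v / T) * Real.exp (-T^2/(2*v)) := by
  have hk : 0 < T / v := div_pos hT hv
  have key : ∀ t : ℝ, Real.exp (-t^2/(2*v)) ≤ Real.exp (T^2/(2*v)) * Real.exp (-(T/v * t)) := by
    intro t
    rw [← Real.exp_add]
    apply Real.exp_le_exp.2
    rw [div_add' _ _ _ (by positivity : (2*v) ≠ 0), div_le_div_iff_of_pos_right (by positivity)]
    have h := sq_nonneg (t - T)
    have : T ^ 2 + -(T / v * t) * (2 * v) = T^2 - 2*T*t := by field_simp; ring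
    rw [this]; nlinarith
  have hint1 : IntegrableOn (fun t : ℝ => Real.exp (-t^2/(2*v))) (Ioi T) := by
    have : (fun t : ℝ => Real.exp (-t^2/(2*v))) = fun t => Real.exp (-(1/(2*v)) * t^2) := by
      funext t; ring_nf
    rw [this]
    exact (integrable_exp_neg_mul_sq (by positivity)).integrableOn
  have hint2 : IntegrableOn (fun t : ℝ => Real.exp (T^2/(2*v)) * Real.exp (-(T/v * t))) (Ioi T) := by
    have := (exp_neg_integrableOn_Ioi T hk)
    exact ((this.congr_fun (fun t _ => by ring_nf) measurableSet_Ioi).const_mul _)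
  calc ∫ t in Ioi T, Real.exp (-t^2/(2*v))
      ≤ ∫ t in Ioi T, Real.exp (T^2/(2*v)) * Real.exp (-(T/v * t)) :=
        setIntegral_mono hint1 hint2 fun t => key t
    _ = Real.exp (T^2/(2*v)) * ∫ t in Ioi T, Real.exp (-(T/v * t)) := by
        rw [integral_const_mul]
    _ = Real.exp (T^2/(2*v)) * ((T/v)⁻¹ * Real.exp (-(T/v * T))) := by
        congr 1
        have := integral_comp_mul_left_Ioi (fun y => Real.exp (-y)) T hk
        simp only [smul_eq_mul] at this
        rw [this, integral_exp_neg_Ioi]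
    _ = (v / T) * Real.exp (-T^2/(2*v)) := by
        rw [inv_div, mul_left_comm, ← Real.exp_add]
        congr 1
        field_simp
        ring

end GQPHelpers

open Set in
set_option maxHeartbeats 1000000 in
/-- **Gaussian quadratic perturbation estimate.** -/
theorem gaussian_quadratic_perturbation
    (a c σ : ℝ) (ha : a ≠ 0) (hσ : 0 < σ) :
    ∃ C : ℝ, 0 < C ∧
      ∀ N : ℕ, 2 ≤ N → ∀ x : ℝ,
        |gaussProb (σ ^ 2) {t | a * t + c / Real.sqrt N * t ^ 2 > x} -
            gaussProb (σ ^ 2) {t | a * t > x}|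
          ≤ C * Real.log N / Real.sqrt N := by
  have hv : (0:ℝ) < σ^2 := by positivity
  set v : ℝ := σ^2 with hvdef
  set c0 : ℝ := (Real.sqrt (2*Real.pi*v))⁻¹ with hc0def
  have hπ : (0:ℝ) < Real.pi := Real.pi_pos
  have hc0 : 0 < c0 := by positivity
  have hL2 : 0 < Real.log 2 := Real.log_pos one_lt_two
  set f : ℝ → ℝ := fun t => c0 * Real.exp (-t^2/(2*v)) with hfdef
  have hf : Integrable f := by
    have h1 : Integrable (fun t : ℝ => Real.exp (-(1/(2*v)) * t^2)) :=
      integrable_exp_neg_mul_sq (by positivity)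
    have h2 : (fun t : ℝ => Real.exp (-(1/(2*v)) * t^2)) = fun t => Real.exp (-t^2/(2*v)) := by
      funext t; ring_nf
    rw [h2] at h1
    exact h1.const_mul _
  have hf0 : ∀ t, 0 ≤ f t := fun t => by positivity
  refine ⟨2*c0*(|c|)*v/(|a|) + 2*(c0*v/(σ*Real.sqrt (Real.log 2)*Real.log 2)) + 1,
    by positivity, ?_⟩
  intro N hN x
  have hN0 : (0:ℝ) < N := by positivity
  have hN2 : (2:ℝ) ≤ N := by exact_mod_cast hN
  have hlogN : Real.log 2 ≤ Real.log N := Real.log_le_log (by norm_num) hN2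
  have hlogNpos : 0 < Real.log (N:ℝ) := lt_of_lt_of_le hL2 hlogN
  have hsN : 0 < Real.sqrt N := Real.sqrt_pos.2 hN0
  set ε : ℝ := c / Real.sqrt N with hεdef
  set T : ℝ := σ * Real.sqrt (Real.log N) with hTdef
  have hT : 0 < T := by positivity
  have hT2 : T^2 = v * Real.log N := by
    rw [hTdef, mul_pow, Real.sq_sqrt hlogNpos.le, hvdef]
  set δ : ℝ := |c| / Real.sqrt N * T^2 with hδdef
  have hδ0 : 0 ≤ δ := by positivity
  have hεabs : |ε| ≤ |c| / Real.sqrt N := by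
    rw [hεdef, abs_div, abs_of_nonneg (Real.sqrt_nonneg _)]
  set A : Set ℝ := {t | a * t + ε * t ^ 2 > x} with hAdef
  set B : Set ℝ := {t | a * t > x} with hBdef
  have hAm : MeasurableSet A :=
    measurableSet_lt measurable_const (by fun_prop)
  have hBm : MeasurableSet B :=
    measurableSet_lt measurable_const (by fun_prop)
  set J : Set ℝ := Icc (x/a - δ/|a|) (x/a + δ/|a|) with hJdef
  have hJm : MeasurableSet J := measurableSet_Icc
  set S : Set ℝ := J ∪ (Ioi T ∪ Iic (-T)) with hSdef
  -- cover
  have hcover : (A \ B) ∪ (B \ A) ⊆ S := by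
    intro t ht
    by_cases hcase : |t| ≤ T
    · left
      have hsq : t^2 ≤ T^2 := by
        have := abs_le.1 hcase
        nlinarith
      have hεt : |ε * t^2| ≤ δ := by
        rw [abs_mul, abs_of_nonneg (sq_nonneg t), hδdef]
        have h1 : |ε| * t^2 ≤ (|c| / Real.sqrt N) * T^2 := by
          apply mul_le_mul hεabs hsq (sq_nonneg t) (by positivity)
        exact h1
      have hεt' := abs_le.1 hεt
      have habs : |a * t - x| ≤ δ := by
        obtain ⟨he1, he2⟩ := hεt'
        rcases ht with ⟨h1, h2⟩ | ⟨h1, h2⟩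
        · have h1' : x < a * t + ε * t ^ 2 := h1
          have h2' : ¬ (x < a * t) := h2
          push_neg at h2'
          rw [abs_le]
          constructor <;> linarith
        · have h1' : x < a * t := h1
          have h2' : ¬ (x < a * t + ε * t ^ 2) := h2
          push_neg at h2'
          rw [abs_le]
          constructor <;> linarith
      have hta : |t - x/a| ≤ δ/|a| := by
        have heq : t - x/a = (a*t - x)/a := by field_simp
        rw [heq, abs_div]
        gcongr
      have := abs_le.1 hta
      exact mem_Icc.2 ⟨by linarith [this.1], by linarith [this.2]⟩
    · right
      push_neg at hcase
      rcases lt_abs.1 hcase with h | h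
      · exact Or.inl h
      · exact Or.inr (by simp only [mem_Iic]; linarith)
  have hSm : MeasurableSet S :=
    hJm.union (measurableSet_Ioi.union measurableSet_Iic)
  -- main estimate chain
  have step1 : |(∫ t in A, f t) - ∫ t in B, f t| ≤ ∫ t in S, f t :=
    my_abs_diff hf hf0 hAm hBm hcover
  have step2 : ∫ t in S, f t ≤
      (∫ t in J, f t) + ((∫ t in Ioi T, f t) + ∫ t in Iic (-T), f t) := by
    refine (my_union_le hf hf0 hJm (measurableSet_Ioi.union measurableSet_Iic)).trans ?_
    exact add_le_add (le_refl _) (my_union_le hf hf0 measurableSet_Ioi measurableSet_Iic)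
  -- interval bound
  have hJbound : ∫ t in J, f t ≤ (2*δ/|a|) * c0 := by
    have hle : ∀ t ∈ J, f t ≤ c0 := by
      intro t _
      rw [hfdef]
      calc c0 * Real.exp (-t^2/(2*v)) ≤ c0 * 1 := by
            apply mul_le_mul_of_nonneg_left _ hc0.le
            apply Real.exp_le_one_iff.2
            rw [neg_div]
            exact neg_nonpos.2 (by positivity)
        _ = c0 := mul_one c0
    calc ∫ t in J, f t ≤ ∫ _t in J, c0 := by
          apply setIntegral_mono_on hf.integrableOn (integrableOn_const ?_) hJm hle
          rw [hJdef, Real.volume_Icc]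
          exact ENNReal.ofReal_ne_top
      _ = (volume J).toReal * c0 := by rw [setIntegral_const, smul_eq_mul]; rfl
      _ = (2*δ/|a|) * c0 := by
          rw [hJdef, Real.volume_Icc, ENNReal.toReal_ofReal (by
            have : 0 ≤ δ/|a| := by positivity
            linarith)]
          congr 1
          have : 0 < |a| := abs_pos.2 ha
          field_simp
          ring
  -- tail bounds
  have hsym : ∫ t in Iic (-T), f t = ∫ t in Ioi T, f t := by
    rw [← integral_comp_neg_Ioi]
    congr 1
    funext t
    rw [hfdef]
    simp [neg_pow]
  have hexp : Real.exp (-T^2/(2*v)) = (Real.sqrt N)⁻¹ := by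
    have h1 : -T^2/(2*v) = -(Real.log N)/2 := by
      rw [hT2]; field_simp
    have h2 : Real.sqrt (N:ℝ) = Real.exp (Real.log N * (1/2)) := by
      rw [Real.sqrt_eq_rpow, Real.rpow_def_of_pos hN0]
    rw [h1, h2, ← Real.exp_neg]
    congr 1
    ring
  have htail : ∫ t in Ioi T, f t ≤ c0*v/(σ*Real.sqrt (Real.log 2)*Real.log 2) *
      (Real.log N / Real.sqrt N) := by
    have h1 : ∫ t in Ioi T, f t ≤ c0 * ((v/T) * (Real.sqrt N)⁻¹) := by
      rw [hfdef, integral_const_mul]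
      apply mul_le_mul_of_nonneg_left _ hc0.le
      rw [← hexp]
      exact my_tail hv hT
    refine h1.trans ?_
    have hTge : σ * Real.sqrt (Real.log 2) ≤ T := by
      rw [hTdef]
      exact mul_le_mul_of_nonneg_left (Real.sqrt_le_sqrt hlogN) hσ.le
    have h2 : v/T ≤ v/(σ*Real.sqrt (Real.log 2)) :=
      div_le_div_of_nonneg_left hv.le (by positivity) hTge
    have h3 : (Real.sqrt N)⁻¹ ≤ (Real.log N / Real.log 2) * (Real.sqrt N)⁻¹ := by
      nth_rewrite 1 [← one_mul (Real.sqrt (N:ℝ))⁻¹]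
      apply mul_le_mul_of_nonneg_right ((one_le_div hL2).2 hlogN) (by positivity)
    calc c0 * ((v/T) * (Real.sqrt N)⁻¹)
        ≤ c0 * ((v/(σ*Real.sqrt (Real.log 2))) * ((Real.log N / Real.log 2) * (Real.sqrt N)⁻¹)) := by
          apply mul_le_mul_of_nonneg_left _ hc0.le
          apply mul_le_mul h2 h3 (by positivity) (by positivity)
      _ = c0*v/(σ*Real.sqrt (Real.log 2)*Real.log 2) * (Real.log N / Real.sqrt N) := by
          have hs2 : (0:ℝ) < Real.sqrt (Real.log 2) := Real.sqrt_pos.2 hL2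
          field_simp
  -- interval value
  have hJval : (2*δ/|a|) * c0 = 2*c0*(|c|)*v/(|a|) * (Real.log N / Real.sqrt N) := by
    rw [hδdef, hT2]
    have : 0 < |a| := abs_pos.2 ha
    field_simp
  -- finish
  have hgA : gaussProb v A = ∫ t in A, f t := by
    simp only [gaussProb, hfdef, hc0def]
  have hgB : gaussProb v B = ∫ t in B, f t := by
    simp only [gaussProb, hfdef, hc0def]
  rw [hgA, hgB]
  have hτ : 0 ≤ Real.log N / Real.sqrt N := by positivity
  calc |(∫ t in A, f t) - ∫ t in B, f t|
      ≤ (∫ t in J, f t) + ((∫ t in Ioi T, f t) + ∫ t in Iic (-T), f t) := step1.trans step2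
    _ ≤ 2*c0*(|c|)*v/(|a|) * (Real.log N / Real.sqrt N)
        + (c0*v/(σ*Real.sqrt (Real.log 2)*Real.log 2) * (Real.log N / Real.sqrt N)
          + c0*v/(σ*Real.sqrt (Real.log 2)*Real.log 2) * (Real.log N / Real.sqrt N)) := by
        apply add_le_add (hJbound.trans_eq hJval)
        exact add_le_add htail (hsym.le.trans htail)
    _ = (2*c0*(|c|)*v/(|a|) + 2*(c0*v/(σ*Real.sqrt (Real.log 2)*Real.log 2)))
          * (Real.log N / Real.sqrt N) := by ring
    _ ≤ (2*c0*(|c|)*v/(|a|) + 2*(c0*v/(σ*Real.sqrt (Real.log 2)*Real.log 2)) + 1)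
          * (Real.log N / Real.sqrt N) := by
        apply mul_le_mul_of_nonneg_right _ hτ
        linarith
    _ = (2*c0*(|c|)*v/(|a|) + 2*(c0*v/(σ*Real.sqrt (Real.log 2)*Real.log 2)) + 1)
          * Real.log N / Real.sqrt N := by ring
end
end
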